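/- arXiv:0906.1888 — 5 statements merged into one kernel-verified Lean document; each statement's English description precedes it below -/
import Mathlib

section
/- Let θ₁, θ₂ ∈ ℝ and let w = w₁ + w₂·j be a quaternion with w₁, w₂ ∈ ℂ and |w| = 1. Then the quaternion e^{iθ₁} w e^{−iθ₂} w̄ + w e^{iθ₂} w̄ e^{−iθ₁} is real and equals 2(|w₁|² cos(θ₁ − θ₂) + |w₂|² cos(θ₁ + θ₂)). -/
open Quaternion

/-- The quaternion `e^{iθ} = cos θ + (sin θ)·i`. -/
noncomputable def expI (θ : ℝ) : ℍ[ℝ] := ⟨Real.cos θ, Real.sin θ, 0, 0⟩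

/-- A complex number `x + y·i` regarded as a quaternion. -/
def cq (z : ℂ) : ℍ[ℝ] := ⟨z.re, z.im, 0, 0⟩

/-- The quaternion unit `j`. -/
def jq : ℍ[ℝ] := ⟨0, 0, 1, 0⟩

set_option maxHeartbeats 1000000 in
theorem stmt0 (θ₁ θ₂ : ℝ) (w₁ w₂ : ℂ) (w : ℍ[ℝ])
    (hw : w = cq w₁ + cq w₂ * jq) (hnorm : ‖w‖ = 1) :
    expI θ₁ * w * expI (-θ₂) * star w + w * expI θ₂ * star w * expI (-θ₁)
      = ((2 * (‖w₁‖ ^ 2 * Real.cos (θ₁ - θ₂)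
          + ‖w₂‖ ^ 2 * Real.cos (θ₁ + θ₂)) : ℝ) : ℍ[ℝ]) := by
  have h : w₁.re^2 + w₁.im^2 + w₂.re^2 + w₂.im^2 = 1 := by
    have h2 : Quaternion.normSq w = 1 := by
      rw [Quaternion.normSq_eq_norm_mul_self, hnorm]; norm_num
    rw [Quaternion.normSq_def', hw] at h2
    simp only [Quaternion.re_mul, Quaternion.imI_mul, Quaternion.imJ_mul,
      Quaternion.imK_mul, Quaternion.re_add, Quaternion.imI_add, Quaternion.imJ_add,
      Quaternion.imK_add] at h2
    simp only [cq, jq] at h2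
    linarith [h2]
  have c1 := Real.sin_sq_add_cos_sq θ₁
  have c2 := Real.sin_sq_add_cos_sq θ₂
  subst hw
  ext <;>
    simp only [Quaternion.re_mul, Quaternion.imI_mul, Quaternion.imJ_mul,
      Quaternion.imK_mul, Quaternion.re_add, Quaternion.imI_add, Quaternion.imJ_add,
      Quaternion.imK_add, Quaternion.re_star, Quaternion.imI_star, Quaternion.imJ_star,
      Quaternion.imK_star, Quaternion.re_coe, Quaternion.imI_coe, Quaternion.imJ_coe,
      Quaternion.imK_coe, Real.cos_neg, Real.sin_neg, Complex.sq_norm,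
      Complex.normSq_apply, Real.cos_sub, Real.cos_add] <;>
    simp only [expI, cq, jq, Real.cos_neg, Real.sin_neg] <;>
    nlinarith [h, c1, c2, sq_nonneg (Real.sin θ₁)]
end

section
/- Let θ₁, θ₂ ∈ [0, π]. Then sup{ |u e^{iθ₁} u⁻¹ − w e^{iθ₂} w⁻¹|² : u, w ∈ ℍ \ {0} } = max{ 4 sin²((θ₁ − θ₂)/2), 4 sin²((θ₁ + θ₂)/2) }, and this supremum is attained. -/
open Quaternion

/-- The quaternion `j`. -/
def myJ : ℍ[ℝ] := ⟨0, 0, 1, 0⟩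

lemma norm_sq_eq' (q : ℍ[ℝ]) : ‖q‖ ^ 2 = q.re^2 + q.imI^2 + q.imJ^2 + q.imK^2 := by
  rw [sq, ← Quaternion.normSq_eq_norm_mul_self, Quaternion.normSq_def']

lemma re_conj' (u x : ℍ[ℝ]) (hu : u ≠ 0) : (u * x * u⁻¹).re = x.re := by
  have : (u * x * u⁻¹).re = (u⁻¹ * (u * x)).re := by simp [Quaternion.re_mul]; ring
  rw [this, ← mul_assoc, inv_mul_cancel₀ hu, one_mul]

lemma norm_expI' (θ : ℝ) : ‖expI θ‖ = 1 := by
  have h : ‖expI θ‖ ^ 2 = 1 := by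
    rw [norm_sq_eq']
    show Real.cos θ ^ 2 + Real.sin θ ^ 2 + 0^2 + 0^2 = 1
    nlinarith [Real.sin_sq_add_cos_sq θ]
  nlinarith [norm_nonneg (expI θ)]

lemma norm_conj' (u x : ℍ[ℝ]) (hu : u ≠ 0) : ‖u * x * u⁻¹‖ = ‖x‖ := by
  have h : ‖u‖ ≠ 0 := norm_ne_zero_iff.mpr hu
  rw [norm_mul, norm_mul, norm_inv]
  field_simp

lemma sin_half_sq (x : ℝ) : Real.sin (x/2) ^ 2 = (1 - Real.cos x) / 2 := by
  have h := Real.sin_sq_eq_half_sub (x/2)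
  rw [h, show 2 * (x/2) = x by ring]
  ring

theorem stmt4 (θ₁ θ₂ : ℝ) (h₁ : θ₁ ∈ Set.Icc 0 Real.pi) (h₂ : θ₂ ∈ Set.Icc 0 Real.pi) :
    IsGreatest {r : ℝ | ∃ u w : ℍ[ℝ], u ≠ 0 ∧ w ≠ 0 ∧
        r = ‖u * expI θ₁ * u⁻¹ - w * expI θ₂ * w⁻¹‖ ^ 2}
      (max (4 * Real.sin ((θ₁ - θ₂) / 2) ^ 2) (4 * Real.sin ((θ₁ + θ₂) / 2) ^ 2)) := by
  obtain ⟨h10, h1p⟩ := h₁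
  obtain ⟨h20, h2p⟩ := h₂
  have hs₁ : 0 ≤ Real.sin θ₁ := Real.sin_nonneg_of_nonneg_of_le_pi h10 h1p
  have hs₂ : 0 ≤ Real.sin θ₂ := Real.sin_nonneg_of_nonneg_of_le_pi h20 h2p
  have hmax : max (4 * Real.sin ((θ₁ - θ₂) / 2) ^ 2) (4 * Real.sin ((θ₁ + θ₂) / 2) ^ 2)
      = 2 - 2 * Real.cos (θ₁ + θ₂) := by
    rw [max_eq_right, sin_half_sq]
    · ring
    · rw [sin_half_sq, sin_half_sq, Real.cos_add, Real.cos_sub]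
      nlinarith [mul_nonneg hs₁ hs₂]
  rw [hmax]
  constructor
  · refine ⟨1, myJ, one_ne_zero, ?_, ?_⟩
    · intro h
      simpa [myJ] using congrArg QuaternionAlgebra.imJ h
    · have hj : myJ⁻¹ = (⟨0,0,-1,0⟩ : ℍ[ℝ]) := by
        apply inv_eq_of_mul_eq_one_right
        ext <;> simp [myJ] <;> erw [QuaternionAlgebra.mk_mul_mk] <;> norm_num
      rw [hj, one_mul, inv_one, mul_one]
      rw [norm_sq_eq']
      have e1 : (expI θ₁ - myJ * expI θ₂ * ⟨0,0,-1,0⟩ : ℍ[ℝ])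
          = ⟨Real.cos θ₁ - Real.cos θ₂, Real.sin θ₁ + Real.sin θ₂, 0, 0⟩ := by
        have : (⟨0,0,-1,0⟩ : ℍ[ℝ]) = -myJ := by ext <;> simp [Quaternion.re_neg] <;> simp [myJ]
        rw [this]
        ext <;> simp [Quaternion.re_mul, Quaternion.imI_mul, Quaternion.imJ_mul,
          Quaternion.imK_mul] <;> simp [expI, myJ] <;> ring
      rw [e1, Real.cos_add]
      show 2 - 2*(Real.cos θ₁ * Real.cos θ₂ - Real.sin θ₁ * Real.sin θ₂)
          = (Real.cos θ₁ - Real.cos θ₂)^2 + (Real.sin θ₁ + Real.sin θ₂)^2 + 0^2 + 0^2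
      nlinarith [Real.sin_sq_add_cos_sq θ₁, Real.sin_sq_add_cos_sq θ₂]
  · rintro r ⟨u, w, hu, hw, rfl⟩
    set a := u * expI θ₁ * u⁻¹ with ha
    set b := w * expI θ₂ * w⁻¹ with hb
    have hna : ‖a‖ ^ 2 = 1 := by rw [ha, norm_conj' _ _ hu, norm_expI']; norm_num
    have hnb : ‖b‖ ^ 2 = 1 := by rw [hb, norm_conj' _ _ hw, norm_expI']; norm_num
    have hra : a.re = Real.cos θ₁ := re_conj' u _ hu
    have hrb : b.re = Real.cos θ₂ := re_conj' w _ hw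
    clear_value a b
    clear ha hb
    rw [norm_sq_eq'] at hna hnb ⊢
    simp only [Quaternion.re_sub, Quaternion.imI_sub, Quaternion.imJ_sub, Quaternion.imK_sub]
    rw [hra] at hna ⊢
    rw [hrb] at hnb ⊢
    have hA : a.imI^2 + a.imJ^2 + a.imK^2 = Real.sin θ₁ ^ 2 := by
      linarith [Real.sin_sq_add_cos_sq θ₁]
    have hB : b.imI^2 + b.imJ^2 + b.imK^2 = Real.sin θ₂ ^ 2 := by
      linarith [Real.sin_sq_add_cos_sq θ₂]
    have hCS : (a.imI*b.imI + a.imJ*b.imJ + a.imK*b.imK)^2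
        ≤ Real.sin θ₁ ^ 2 * Real.sin θ₂ ^ 2 := by
      rw [← hA, ← hB]
      linarith [sq_nonneg (a.imI*b.imJ - a.imJ*b.imI), sq_nonneg (a.imI*b.imK - a.imK*b.imI),
        sq_nonneg (a.imJ*b.imK - a.imK*b.imJ)]
    have hS : -(a.imI*b.imI + a.imJ*b.imJ + a.imK*b.imK) ≤ Real.sin θ₁ * Real.sin θ₂ := by
      nlinarith [hCS, mul_nonneg hs₁ hs₂]
    rw [Real.cos_add]
    linarith [hA, hB, hS, Real.sin_sq_add_cos_sq θ₁, Real.sin_sq_add_cos_sq θ₂]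
end

section
/- Let h ∈ Sp(n,1) with block form h = [[A, α],[β, a]], let g = diag(λ₁, …, λₙ, λ_{n+1}) with each |λᵢ| = 1, and set δ = max_{1≤i≤n} sup{ |u λᵢ u⁻¹ − w λ_{n+1} w⁻¹|² : u, w ∈ ℍ \ {0} }. If a′ denotes the (n+1, n+1) entry of h g h⁻¹, then |a′|² − 1 ≤ (|a|² − 1)·|a|²·δ. -/
open Quaternion Matrix

/-- The Hermitian form `J = diag(1,…,1,−1)` on `ℍ^{n,1}`, as an `(n+1)×(n+1)`
quaternionic matrix indexed by `Fin n ⊕ Unit`. -/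
noncomputable def Jm (n : ℕ) : Matrix (Fin n ⊕ Unit) (Fin n ⊕ Unit) ℍ[ℝ] :=
  Matrix.fromBlocks 1 0 0 (-1)

/-- `Sp(n,1)`: the quaternionic matrices `g` with `g* J g = J`. -/
noncomputable def Sp (n : ℕ) : Set (Matrix (Fin n ⊕ Unit) (Fin n ⊕ Unit) ℍ[ℝ]) :=
  {g | gᴴ * Jm n * g = Jm n}

lemma JmJm (n : ℕ) : Jm n * Jm n = 1 := by
  simp [Jm, Matrix.fromBlocks_multiply, Matrix.fromBlocks_one]

lemma entryJ (n : ℕ) (h : Matrix (Fin n ⊕ Unit) (Fin n ⊕ Unit) ℍ[ℝ]) :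
    (h * Jm n * hᴴ) (Sum.inr ()) (Sum.inr ()) =
      (∑ i : Fin n, h (Sum.inr ()) (Sum.inl i) * star (h (Sum.inr ()) (Sum.inl i)))
        - h (Sum.inr ()) (Sum.inr ()) * star (h (Sum.inr ()) (Sum.inr ())) := by
  simp [Matrix.mul_apply, Fintype.sum_sum_type, Jm, Matrix.fromBlocks, Matrix.one_apply,
    Finset.mul_sum, Finset.sum_mul, Matrix.conjTranspose_apply, Finset.sum_ite_eq,
    mul_ite, ite_mul, sub_eq_add_neg]

lemma entryD (n : ℕ) (h : Matrix (Fin n ⊕ Unit) (Fin n ⊕ Unit) ℍ[ℝ]) (lam : Fin n ⊕ Unit → ℍ[ℝ]) :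
    (h * Matrix.diagonal lam * (Jm n * hᴴ * Jm n)) (Sum.inr ()) (Sum.inr ()) =
      h (Sum.inr ()) (Sum.inr ()) * lam (Sum.inr ()) * star (h (Sum.inr ()) (Sum.inr ()))
      - ∑ i : Fin n, h (Sum.inr ()) (Sum.inl i) * lam (Sum.inl i) *
          star (h (Sum.inr ()) (Sum.inl i)) := by
  simp [Matrix.mul_apply, Fintype.sum_sum_type, Jm, Matrix.fromBlocks, Matrix.one_apply,
    Finset.mul_sum, Finset.sum_mul, Matrix.conjTranspose_apply, Finset.sum_ite_eq,
    Matrix.diagonal, mul_ite, ite_mul, sub_eq_add_neg, mul_assoc]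
  exact add_comm _ _

lemma mul_star_smul (x l : ℍ[ℝ]) : x * l * star x = ‖x‖^2 • (x * l * x⁻¹) := by
  by_cases hx : x = 0
  · simp [hx]
  · have h1 : x * l * star x = (x * l * x⁻¹) * (x * star x) := by
      rw [mul_assoc (x*l) x⁻¹, ← mul_assoc x⁻¹ x, inv_mul_cancel₀ hx, one_mul, mul_assoc]
    rw [h1, Quaternion.self_mul_star, Quaternion.mul_coe_eq_smul,
      Quaternion.normSq_eq_norm_mul_self, ← sq]

lemma norm_conj (x l : ℍ[ℝ]) (hx : x ≠ 0) (hl : ‖l‖ = 1) : ‖x * l * x⁻¹‖ = 1 := by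
  rw [norm_mul, norm_mul, hl, norm_inv, mul_one, mul_inv_cancel₀ (norm_ne_zero_iff.mpr hx)]

lemma two_inner (x y : ℍ[ℝ]) (hx : ‖x‖ = 1) (hy : ‖y‖ = 1) :
    2 * (inner ℝ x (x - y) : ℝ) = ‖x - y‖^2 := by
  have h1 := norm_sub_sq_real x y
  rw [inner_sub_right, real_inner_self_eq_norm_sq, hx]
  rw [hx, hy] at h1
  nlinarith [h1]

set_option maxHeartbeats 1000000 in
theorem stmt9 (n : ℕ) (h : Matrix (Fin n ⊕ Unit) (Fin n ⊕ Unit) ℍ[ℝ]) (hSp : h ∈ Sp n)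
    (lam : Fin n ⊕ Unit → ℍ[ℝ]) (hlam : ∀ i, ‖lam i‖ = 1)
    (h' : Matrix (Fin n ⊕ Unit) (Fin n ⊕ Unit) ℍ[ℝ]) (hinv : h * h' = 1 ∧ h' * h = 1)
    (δ : ℝ)
    (hδ : δ = sSup {r : ℝ | ∃ i : Fin n, ∃ u w : ℍ[ℝ], u ≠ 0 ∧ w ≠ 0 ∧
        r = ‖u * lam (Sum.inl i) * u⁻¹ - w * lam (Sum.inr ()) * w⁻¹‖ ^ 2}) :
    ‖(h * Matrix.diagonal lam * h') (Sum.inr ()) (Sum.inr ())‖ ^ 2 - 1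
      ≤ (‖h (Sum.inr ()) (Sum.inr ())‖ ^ 2 - 1) * ‖h (Sum.inr ()) (Sum.inr ())‖ ^ 2 * δ := by
  classical
  -- h' = J hᴴ J and h J hᴴ = J
  have hSp' : hᴴ * Jm n * h = Jm n := hSp
  have k1 : (Jm n * hᴴ * Jm n) * h = 1 := by
    calc (Jm n * hᴴ * Jm n) * h = Jm n * (hᴴ * Jm n * h) := by simp only [Matrix.mul_assoc]
    _ = 1 := by rw [hSp', JmJm]
  have he : h' = Jm n * hᴴ * Jm n := by
    calc h' = 1 * h' := (Matrix.one_mul h').symm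
    _ = (Jm n * hᴴ * Jm n) * h * h' := by rw [k1]
    _ = (Jm n * hᴴ * Jm n) * (h * h') := by rw [Matrix.mul_assoc]
    _ = Jm n * hᴴ * Jm n := by rw [hinv.1, Matrix.mul_one]
  have hJ : h * Jm n * hᴴ = Jm n := by
    have h2 := hinv.1
    rw [he] at h2
    calc h * Jm n * hᴴ = h * Jm n * hᴴ * (Jm n * Jm n) := by rw [JmJm, Matrix.mul_one]
    _ = (h * (Jm n * hᴴ * Jm n)) * Jm n := by simp only [Matrix.mul_assoc]
    _ = Jm n := by rw [h2, Matrix.one_mul]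
  set a : ℍ[ℝ] := h (Sum.inr ()) (Sum.inr ()) with ha_def
  set β : Fin n → ℍ[ℝ] := fun i => h (Sum.inr ()) (Sum.inl i) with hβ_def
  set c : Fin n → ℝ := fun i => ‖β i‖^2 with hc_def
  set t : ℝ := ∑ i, c i with ht_def
  have hc0 : ∀ i, 0 ≤ c i := fun i => sq_nonneg _
  have ht0 : 0 ≤ t := Finset.sum_nonneg fun i _ => hc0 i
  -- norm relation: ∑ c i = ‖a‖^2 - 1
  have hrel : t = ‖a‖^2 - 1 := by
    have e1 : (h * Jm n * hᴴ) (Sum.inr ()) (Sum.inr ()) = (Jm n) (Sum.inr ()) (Sum.inr ()) := by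
      rw [hJ]
    rw [entryJ] at e1
    have eJ : (Jm n) (Sum.inr ()) (Sum.inr ()) = ((-1 : ℝ) : ℍ[ℝ]) := by
      simp [Jm, Matrix.fromBlocks]
    have estar : ∀ x : ℍ[ℝ], x * star x = ((‖x‖^2 : ℝ) : ℍ[ℝ]) := by
      intro x
      rw [Quaternion.self_mul_star, Quaternion.normSq_eq_norm_mul_self, sq]
    simp only [estar, eJ] at e1
    have e2 : ((t - ‖a‖^2 : ℝ) : ℍ[ℝ]) = ((-1 : ℝ) : ℍ[ℝ]) := by
      rw [Quaternion.coe_sub, ← e1, ht_def]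
      congr 1
      rw [show ((∑ i, c i : ℝ) : ℍ[ℝ]) = ∑ i, ((c i : ℝ) : ℍ[ℝ]) from
        by exact_mod_cast map_sum (algebraMap ℝ ℍ[ℝ]) c Finset.univ]
    have := Quaternion.coe_injective e2
    linarith
  have hna : ‖a‖^2 = 1 + t := by linarith
  have ha0 : a ≠ 0 := by
    intro hz
    rw [hz] at hna
    simp at hna
    linarith
  -- the conjugated units
  set lt : ℍ[ℝ] := a * lam (Sum.inr ()) * a⁻¹ with hlt_def
  have hltn : ‖lt‖ = 1 := norm_conj _ _ ha0 (hlam _)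
  set μ : Fin n → ℍ[ℝ] := fun i =>
    if β i = 0 then lt else β i * lam (Sum.inl i) * (β i)⁻¹ with hμ_def
  have hμn : ∀ i, ‖μ i‖ = 1 := by
    intro i
    by_cases hb : β i = 0
    · simp [hμ_def, hb, hltn]
    · simp only [hμ_def, if_neg hb]
      exact norm_conj _ _ hb (hlam _)
  -- decomposition a' = lt + s
  set s : ℍ[ℝ] := ∑ i, c i • (lt - μ i) with hs_def
  have ha' : (h * Matrix.diagonal lam * h') (Sum.inr ()) (Sum.inr ()) = lt + s := by
    rw [he, entryD]
    have term : ∀ i, β i * lam (Sum.inl i) * star (β i) = c i • μ i := by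
      intro i
      by_cases hb : β i = 0
      · simp [hb, hc_def]
      · simp only [hμ_def, if_neg hb, hc_def]
        exact mul_star_smul _ _
    have terma : a * lam (Sum.inr ()) * star a = (1 + t) • lt := by
      rw [mul_star_smul, hna]
    change a * lam (Sum.inr ()) * star a - ∑ i : Fin n, β i * lam (Sum.inl i) * star (β i) = lt + s
    simp only [term, terma]
    rw [hs_def]
    rw [add_smul, one_smul, ht_def, Finset.sum_smul]
    simp only [smul_sub]
    rw [Finset.sum_sub_distrib]
    abel
  rw [ha']
  -- key bound on each term
  have hkey : ∀ i, β i ≠ 0 → ‖lt - μ i‖^2 ≤ δ := by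
    intro i hb
    have hmem : ‖lt - μ i‖^2 ∈ {r : ℝ | ∃ i : Fin n, ∃ u w : ℍ[ℝ], u ≠ 0 ∧ w ≠ 0 ∧
        r = ‖u * lam (Sum.inl i) * u⁻¹ - w * lam (Sum.inr ()) * w⁻¹‖ ^ 2} := by
      refine ⟨i, β i, a, hb, ha0, ?_⟩
      rw [hμ_def]
      simp only [if_neg hb]
      rw [← norm_sub_rev]
    have hbdd : BddAbove {r : ℝ | ∃ i : Fin n, ∃ u w : ℍ[ℝ], u ≠ 0 ∧ w ≠ 0 ∧
        r = ‖u * lam (Sum.inl i) * u⁻¹ - w * lam (Sum.inr ()) * w⁻¹‖ ^ 2} := by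
      refine ⟨4, ?_⟩
      rintro r ⟨j, u, w, hu, hw, rfl⟩
      have h1 : ‖u * lam (Sum.inl j) * u⁻¹‖ = 1 := norm_conj _ _ hu (hlam _)
      have h2 : ‖w * lam (Sum.inr ()) * w⁻¹‖ = 1 := norm_conj _ _ hw (hlam _)
      have h3 : ‖u * lam (Sum.inl j) * u⁻¹ - w * lam (Sum.inr ()) * w⁻¹‖ ≤ 2 := by
        calc _ ≤ ‖u * lam (Sum.inl j) * u⁻¹‖ + ‖w * lam (Sum.inr ()) * w⁻¹‖ := norm_sub_le _ _
        _ = 2 := by rw [h1, h2]; norm_num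
      nlinarith [norm_nonneg (u * lam (Sum.inl j) * u⁻¹ - w * lam (Sum.inr ()) * w⁻¹)]
    rw [hδ]
    exact le_csSup hbdd hmem
  -- case t = 0
  by_cases hts : t = 0
  · have htz : ∑ i, c i = 0 := by rw [← ht_def]; exact hts
    have hcz : ∀ i ∈ Finset.univ, c i = 0 :=
      (Finset.sum_eq_zero_iff_of_nonneg (fun j _ => hc0 j)).mp htz
    have hsz : s = 0 := by
      rw [hs_def]
      exact Finset.sum_eq_zero fun i hi => by rw [hcz i hi, zero_smul]
    rw [hsz, add_zero, hltn, hna, hts]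
    norm_num
  -- case t > 0 : some c i ≠ 0, hence δ ≥ 0
  · have ht0' : 0 < t := lt_of_le_of_ne ht0 (Ne.symm hts)
    have hex : ∃ i, β i ≠ 0 := by
      by_contra hc
      push_neg at hc
      apply hts
      rw [ht_def]
      exact Finset.sum_eq_zero fun i _ => by simp [hc_def, hc i]
    obtain ⟨i0, hi0⟩ := hex
    have hδ0 : 0 ≤ δ := le_trans (sq_nonneg _) (hkey i0 hi0)
    -- bound the inner product term
    have hinner : 2 * (inner ℝ lt s : ℝ) ≤ t * δ := by
      rw [hs_def, inner_sum]
      rw [Finset.mul_sum]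
      rw [ht_def, Finset.sum_mul]
      refine Finset.sum_le_sum fun i _ => ?_
      rw [real_inner_smul_right]
      rw [show (2:ℝ) * (c i * inner ℝ lt (lt - μ i)) = c i * (2 * inner ℝ lt (lt - μ i)) by ring]
      rw [two_inner lt (μ i) hltn (hμn i)]
      by_cases hb : β i = 0
      · have : c i = 0 := by simp [hc_def, hb]
        rw [this]; simp
      · exact mul_le_mul_of_nonneg_left (hkey i hb) (hc0 i)
    -- bound on ‖s‖
    have hsn : ‖s‖ ≤ t * Real.sqrt δ := by
      rw [hs_def, ht_def, Finset.sum_mul]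
      calc ‖∑ i, c i • (lt - μ i)‖ ≤ ∑ i, ‖c i • (lt - μ i)‖ := norm_sum_le _ _
      _ ≤ ∑ i, c i * Real.sqrt δ := by
          refine Finset.sum_le_sum fun i _ => ?_
          rw [norm_smul, Real.norm_eq_abs, abs_of_nonneg (hc0 i)]
          by_cases hb : β i = 0
          · have : c i = 0 := by simp [hc_def, hb]
            rw [this]; simp [Real.sqrt_nonneg]
          · refine mul_le_mul_of_nonneg_left ?_ (hc0 i)
            rw [← Real.sqrt_sq (norm_nonneg (lt - μ i))]
            exact Real.sqrt_le_sqrt (hkey i hb)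
    have hs2 : ‖s‖^2 ≤ t^2 * δ := by
      have h1 : ‖s‖^2 ≤ (t * Real.sqrt δ)^2 :=
        pow_le_pow_left₀ (norm_nonneg s) hsn 2
      calc ‖s‖^2 ≤ (t * Real.sqrt δ)^2 := h1
      _ = t^2 * δ := by rw [mul_pow, Real.sq_sqrt hδ0]
    -- put it together
    have hfinal := norm_add_sq_real lt s
    rw [hltn] at hfinal
    rw [hfinal, hna]
    nlinarith [hinner, hs2, ht0']
end

section
/- (Complex corollary, normalized form.) Let μ₁, μ₂, μ₃ ∈ ℂ with |μ₁| = |μ₂| = |μ₃| = 1, μ₁ ≠ μ₃ and μ₂ ≠ μ₃, let g = diag(μ₁, μ₂, μ₃) ∈ U(2,1), and let h ∈ U(2,1). Set δ = max{ |μ₁ − μ₃|², |μ₂ − μ₃|² }. If |h₃₃|²·δ < 1, then either (i) h₁₃ = h₂₃ = 0, h₃₁ = h₃₂ = 0 and |h₃₃| = 1, i.e. h fixes the origin of the unit ball of ℂ² under the action of U(2,1), or (ii) there exist pairwise distinct elements γ_m of the subgroup generated by g and h and an element γ_∞ ∈ U(2,1) with γ_m → γ_∞ entrywise; in particular the subgroup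 generated by g and h is not discrete. -/
open Matrix Filter Topology

/-- The Hermitian form `J = diag(1, 1, −1)` on `ℂ^{2,1}`. -/
noncomputable def J3 : Matrix (Fin 3) (Fin 3) ℂ := Matrix.diagonal ![1, 1, -1]

/-- `U(2,1)`: the complex `3×3` matrices `h` with `h* J h = J`. -/
noncomputable def U21 : Set (Matrix (Fin 3) (Fin 3) ℂ) :=
  {h | hᴴ * J3 * h = J3}

/-- The subgroup of `U(2,1)` generated by `g` and `h`, realized as the monoid generated
by `g`, `h` and their inverses. -/
noncomputable def genGrpC (g h : Matrix (Fin 3) (Fin 3) ℂ) :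
    Submonoid (Matrix (Fin 3) (Fin 3) ℂ) :=
  Submonoid.closure {g, h, g⁻¹, h⁻¹}

lemma J3_mul_J3 : J3 * J3 = 1 := by
  simp [J3, Matrix.diagonal_mul_diagonal]
  ext i j
  fin_cases i <;> simp [Matrix.diagonal, Matrix.one_apply]

lemma u21_left_inv {k : Matrix (Fin 3) (Fin 3) ℂ} (hk : k ∈ U21) :
    (J3 * kᴴ * J3) * k = 1 := by
  have h : kᴴ * J3 * k = J3 := hk
  have h2 : J3 * (kᴴ * J3 * k) = J3 * J3 := by rw [h]
  rw [J3_mul_J3] at h2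
  rw [← h2]
  simp [Matrix.mul_assoc]

lemma u21_inv_eq {k : Matrix (Fin 3) (Fin 3) ℂ} (hk : k ∈ U21) :
    k⁻¹ = J3 * kᴴ * J3 :=
  Matrix.inv_eq_left_inv (u21_left_inv hk)

lemma u21_right_inv {k : Matrix (Fin 3) (Fin 3) ℂ} (hk : k ∈ U21) :
    k * (J3 * kᴴ * J3) = 1 :=
  mul_eq_one_comm.mpr (u21_left_inv hk)

lemma u21_isUnit_det {k : Matrix (Fin 3) (Fin 3) ℂ} (hk : k ∈ U21) :
    IsUnit k.det :=
  Matrix.isUnit_det_of_left_inverse (u21_left_inv hk)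

lemma u21_second {k : Matrix (Fin 3) (Fin 3) ℂ} (hk : k ∈ U21) :
    k * J3 * kᴴ = J3 := by
  have h2 := congrArg (· * J3) (u21_right_inv hk)
  simp only [Matrix.mul_assoc, Matrix.one_mul] at h2
  rw [J3_mul_J3] at h2
  simpa [Matrix.mul_assoc, Matrix.mul_one] using h2

lemma u21_mul {a b : Matrix (Fin 3) (Fin 3) ℂ} (ha : a ∈ U21) (hb : b ∈ U21) :
    a * b ∈ U21 := by
  have ha' : aᴴ * J3 * a = J3 := ha
  have hb' : bᴴ * J3 * b = J3 := hb
  show (a * b)ᴴ * J3 * (a * b) = J3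
  rw [Matrix.conjTranspose_mul]
  calc bᴴ * aᴴ * J3 * (a * b) = bᴴ * (aᴴ * J3 * a) * b := by
        simp [Matrix.mul_assoc]
  _ = J3 := by rw [ha']; exact hb'

lemma u21_inv {k : Matrix (Fin 3) (Fin 3) ℂ} (hk : k ∈ U21) : k⁻¹ ∈ U21 := by
  rw [u21_inv_eq hk]
  show (J3 * kᴴ * J3)ᴴ * J3 * (J3 * kᴴ * J3) = J3
  have hJ : J3ᴴ = J3 := by
    ext i j; fin_cases i <;> fin_cases j <;> simp [J3, Matrix.diagonal]
  rw [Matrix.conjTranspose_mul, Matrix.conjTranspose_mul, hJ, Matrix.conjTranspose_conjTranspose]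
  have hs := u21_second hk
  calc J3 * (k * J3) * J3 * (J3 * kᴴ * J3) = J3 * ((k * J3 * kᴴ) * J3) := by
        simp only [Matrix.mul_assoc, J3_mul_J3, Matrix.mul_one, Matrix.one_mul]
  _ = J3 := by rw [hs, J3_mul_J3, Matrix.mul_one]

open ComplexConjugate in
lemma colId {k : Matrix (Fin 3) (Fin 3) ℂ} (hk : k ∈ U21) (j l : Fin 3) :
    conj (k 0 j) * k 0 l + conj (k 1 j) * k 1 l - conj (k 2 j) * k 2 l = J3 j l := by
  have h : kᴴ * J3 * k = J3 := hk
  have := congrFun (congrFun h j) l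
  simp [Matrix.mul_apply, Matrix.conjTranspose_apply, J3, Matrix.diagonal_apply,
    Fin.sum_univ_three] at this
  simpa [J3, Matrix.diagonal_apply, sub_eq_add_neg] using this

open ComplexConjugate in
lemma rowId {k : Matrix (Fin 3) (Fin 3) ℂ} (hk : k ∈ U21) (i j : Fin 3) :
    k i 0 * conj (k j 0) + k i 1 * conj (k j 1) - k i 2 * conj (k j 2) = J3 i j := by
  have h := u21_second hk
  have := congrFun (congrFun h i) j
  simp [Matrix.mul_apply, Matrix.conjTranspose_apply, J3, Matrix.diagonal_apply,
    Fin.sum_univ_three] at this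
  simpa [J3, Matrix.diagonal_apply, sub_eq_add_neg] using this

noncomputable def tq (k : Matrix (Fin 3) (Fin 3) ℂ) : ℝ :=
  Complex.normSq (k 2 0) + Complex.normSq (k 2 1)

lemma tq_nonneg (k : Matrix (Fin 3) (Fin 3) ℂ) : 0 ≤ tq k :=
  add_nonneg (Complex.normSq_nonneg _) (Complex.normSq_nonneg _)

lemma normSq_22 {k : Matrix (Fin 3) (Fin 3) ℂ} (hk : k ∈ U21) :
    Complex.normSq (k 2 2) = 1 + tq k := by
  have := rowId hk 2 2
  simp only [J3, Matrix.diagonal_apply_eq] at this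
  have : (Complex.normSq (k 2 0) : ℂ) + Complex.normSq (k 2 1) - Complex.normSq (k 2 2)
      = -1 := by
    rw [← Complex.mul_conj, ← Complex.mul_conj, ← Complex.mul_conj]
    simpa using this
  have := congrArg Complex.re this
  simp [tq] at this ⊢
  linarith

lemma normSq_col2 {k : Matrix (Fin 3) (Fin 3) ℂ} (hk : k ∈ U21) :
    Complex.normSq (k 0 2) + Complex.normSq (k 1 2) = tq k := by
  have := colId hk 2 2
  simp only [J3, Matrix.diagonal_apply_eq] at this
  have h2 : (Complex.normSq (k 0 2) : ℂ) + Complex.normSq (k 1 2) - Complex.normSq (k 2 2)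
      = -1 := by
    rw [Complex.normSq_eq_conj_mul_self, Complex.normSq_eq_conj_mul_self,
      Complex.normSq_eq_conj_mul_self]
    simpa using this
  have h3 := congrArg Complex.re h2
  have h4 := normSq_22 hk
  simp at h3
  linarith

lemma entry_bound {k : Matrix (Fin 3) (Fin 3) ℂ} (hk : k ∈ U21) (i j : Fin 3) :
    Complex.normSq (k i j) ≤ 1 + tq k := by
  have colj : ∀ j : Fin 3, j ≠ 2 → Complex.normSq (k 0 j) + Complex.normSq (k 1 j)
      = 1 + Complex.normSq (k 2 j) := by
    intro j hj
    have := colId hk j j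
    have hJ : J3 j j = 1 := by fin_cases j <;> simp_all [J3, Matrix.diagonal_apply]
    rw [hJ] at this
    have h2 : (Complex.normSq (k 0 j) : ℂ) + Complex.normSq (k 1 j) - Complex.normSq (k 2 j)
        = 1 := by
      rw [Complex.normSq_eq_conj_mul_self, Complex.normSq_eq_conj_mul_self,
        Complex.normSq_eq_conj_mul_self]
      simpa using this
    have h3 := congrArg Complex.re h2
    simp at h3
    linarith
  have h22 := normSq_22 hk
  have hc2 := normSq_col2 hk
  have n0 := Complex.normSq_nonneg (k 0 j)
  have n1 := Complex.normSq_nonneg (k 1 j)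
  have n02 := Complex.normSq_nonneg (k 0 2)
  have n12 := Complex.normSq_nonneg (k 1 2)
  have n20 := Complex.normSq_nonneg (k 2 0)
  have n21 := Complex.normSq_nonneg (k 2 1)
  simp only [tq] at *
  fin_cases i <;> fin_cases j <;>
    simp only [Fin.zero_eta, Fin.mk_one, Fin.reduceFinMk] <;>
    linarith [colj 0 (by decide), colj 1 (by decide),
      Complex.normSq_nonneg (k 0 0), Complex.normSq_nonneg (k 0 1),
      Complex.normSq_nonneg (k 1 0), Complex.normSq_nonneg (k 1 1)]

open ComplexConjugate in
lemma conj_entry {μ₁ μ₂ μ₃ : ℂ} {g k : Matrix (Fin 3) (Fin 3) ℂ}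
    (hg : g = Matrix.diagonal ![μ₁, μ₂, μ₃]) (hk : k ∈ U21) (j : Fin 3) (hj : j ≠ 2) :
    (k * g * k⁻¹) 2 j
      = (μ₁ - μ₃) * (k 2 0 * conj (k j 0)) + (μ₂ - μ₃) * (k 2 1 * conj (k j 1)) := by
  rw [u21_inv_eq hk, hg]
  have hr := rowId hk 2 j
  have hJ : J3 2 j = 0 := by
    fin_cases j <;> simp_all [J3, Matrix.diagonal_apply]
  rw [hJ] at hr
  fin_cases j <;> simp_all [Matrix.mul_apply, Fin.sum_univ_three, Matrix.mul_diagonal,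
    Matrix.diagonal_mul, J3, Matrix.conjTranspose_apply] <;>
    linear_combination μ₃ * hr

open ComplexConjugate in
lemma tq_conj_eq {μ₁ μ₂ μ₃ : ℂ} {g k : Matrix (Fin 3) (Fin 3) ℂ}
    (hg : g = Matrix.diagonal ![μ₁, μ₂, μ₃]) (hk : k ∈ U21) :
    tq (k * g * k⁻¹)
      = Complex.normSq ((μ₁ - μ₃) * k 2 0) + Complex.normSq ((μ₂ - μ₃) * k 2 1)
        + Complex.normSq ((μ₁ - μ₃) * k 2 0 * conj (k 2 0)
            + (μ₂ - μ₃) * k 2 1 * conj (k 2 1)) := by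
  have e0 := conj_entry hg hk 0 (by decide)
  have e1 := conj_entry hg hk 1 (by decide)
  have C00 := colId hk 0 0
  have C01 := colId hk 0 1
  have C10 := colId hk 1 0
  have C11 := colId hk 1 1
  have J00 : J3 0 0 = 1 := by simp [J3, Matrix.diagonal_apply]
  have J01 : J3 0 1 = 0 := by simp [J3, Matrix.diagonal_apply]
  have J10 : J3 1 0 = 0 := by simp [J3, Matrix.diagonal_apply]
  have J11 : J3 1 1 = 1 := by simp [J3, Matrix.diagonal_apply]
  rw [J00] at C00; rw [J01] at C01; rw [J10] at C10; rw [J11] at C11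
  set w0 : ℂ := (μ₁ - μ₃) * k 2 0 with hw0
  set w1 : ℂ := (μ₂ - μ₃) * k 2 1 with hw1
  have key : (k * g * k⁻¹) 2 0 * conj ((k * g * k⁻¹) 2 0)
      + (k * g * k⁻¹) 2 1 * conj ((k * g * k⁻¹) 2 1)
      = w0 * conj w0 + w1 * conj w1
        + (w0 * conj (k 2 0) + w1 * conj (k 2 1))
          * conj (w0 * conj (k 2 0) + w1 * conj (k 2 1)) := by
    rw [e0, e1]
    simp only [map_add, _root_.map_mul, Complex.conj_conj, _root_.map_sub, hw0, hw1]
    linear_combination ((μ₁ - μ₃) * k 2 0 * ((conj μ₁ - conj μ₃) * conj (k 2 0))) * C00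
      + ((μ₁ - μ₃) * k 2 0 * ((conj μ₂ - conj μ₃) * conj (k 2 1))) * C01
      + ((μ₂ - μ₃) * k 2 1 * ((conj μ₁ - conj μ₃) * conj (k 2 0))) * C10
      + ((μ₂ - μ₃) * k 2 1 * ((conj μ₂ - conj μ₃) * conj (k 2 1))) * C11
  rw [Complex.mul_conj, Complex.mul_conj, Complex.mul_conj, Complex.mul_conj,
    Complex.mul_conj] at key
  have := congrArg Complex.re key
  simpa [tq] using this

lemma norm_sq_eq_normSq (z : ℂ) : ‖z‖ ^ 2 = Complex.normSq z := by
  rw [Complex.sq_norm]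

open ComplexConjugate in
lemma step_bounds {μ₁ μ₂ μ₃ : ℂ} {δ : ℝ}
    (hδ : δ = max (‖μ₁ - μ₃‖ ^ 2) (‖μ₂ - μ₃‖ ^ 2))
    {g k : Matrix (Fin 3) (Fin 3) ℂ}
    (hg : g = Matrix.diagonal ![μ₁, μ₂, μ₃]) (hk : k ∈ U21) :
    tq (k * g * k⁻¹) ≤ δ * (1 + tq k) * tq k ∧
    min (Complex.normSq (μ₁ - μ₃)) (Complex.normSq (μ₂ - μ₃)) * tq k ≤ tq (k * g * k⁻¹) := by
  have heq := tq_conj_eq hg hk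
  rw [norm_sq_eq_normSq, norm_sq_eq_normSq] at hδ
  set d0 := μ₁ - μ₃
  set d1 := μ₂ - μ₃
  set a0 := k 2 0
  set a1 := k 2 1
  have hd0 : Complex.normSq d0 ≤ δ := by rw [hδ]; exact le_max_left _ _
  have hd1 : Complex.normSq d1 ≤ δ := by rw [hδ]; exact le_max_right _ _
  have hm0 : Complex.normSq (d0 * a0) = Complex.normSq d0 * Complex.normSq a0 :=
    Complex.normSq_mul _ _
  have hm1 : Complex.normSq (d1 * a1) = Complex.normSq d1 * Complex.normSq a1 :=
    Complex.normSq_mul _ _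
  have htq : tq k = Complex.normSq a0 + Complex.normSq a1 := rfl
  have na0 := Complex.normSq_nonneg a0
  have na1 := Complex.normSq_nonneg a1
  have nd0 := Complex.normSq_nonneg d0
  have nd1 := Complex.normSq_nonneg d1
  have hY : Complex.normSq (d0 * a0 * conj a0 + d1 * a1 * conj a1)
      ≤ (Complex.normSq (d0 * a0) + Complex.normSq (d1 * a1))
        * (Complex.normSq a0 + Complex.normSq a1) := by
    have h1 : ‖d0 * a0 * conj a0 + d1 * a1 * conj a1‖
        ≤ ‖d0 * a0‖ * ‖a0‖ + ‖d1 * a1‖ * ‖a1‖ := by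
      calc ‖d0 * a0 * conj a0 + d1 * a1 * conj a1‖
          ≤ ‖d0 * a0 * conj a0‖ + ‖d1 * a1 * conj a1‖ := norm_add_le _ _
        _ = ‖d0 * a0‖ * ‖a0‖ + ‖d1 * a1‖ * ‖a1‖ := by
            simp [norm_mul, Complex.norm_conj]
    rw [← norm_sq_eq_normSq, ← norm_sq_eq_normSq, ← norm_sq_eq_normSq,
      ← norm_sq_eq_normSq, ← norm_sq_eq_normSq]
    have h2 : (0:ℝ) ≤ ‖d0 * a0 * conj a0 + d1 * a1 * conj a1‖ := norm_nonneg _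
    nlinarith [sq_nonneg (‖d0 * a0‖ * ‖a1‖ - ‖d1 * a1‖ * ‖a0‖), norm_nonneg (d0 * a0),
      norm_nonneg (d1 * a1), norm_nonneg a0, norm_nonneg a1]
  have nY := Complex.normSq_nonneg (d0 * a0 * conj a0 + d1 * a1 * conj a1)
  have hsum : Complex.normSq (d0 * a0) + Complex.normSq (d1 * a1)
      ≤ δ * (Complex.normSq a0 + Complex.normSq a1) := by
    rw [hm0, hm1]
    nlinarith [mul_le_mul_of_nonneg_right hd0 na0, mul_le_mul_of_nonneg_right hd1 na1]
  have hprod := mul_le_mul_of_nonneg_right hsum (add_nonneg na0 na1)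
  constructor
  · rw [heq, htq]
    nlinarith
  · rw [heq, htq]
    rcases le_total (Complex.normSq d0) (Complex.normSq d1) with hle | hle
    · rw [min_eq_left hle]
      nlinarith
    · rw [min_eq_right hle]
      nlinarith

noncomputable def iterSeq (g h : Matrix (Fin 3) (Fin 3) ℂ) : ℕ → Matrix (Fin 3) (Fin 3) ℂ
  | 0 => h
  | n + 1 => iterSeq g h n * g * (iterSeq g h n)⁻¹

lemma iterSeq_mem_U21 {g h : Matrix (Fin 3) (Fin 3) ℂ} (hgU : g ∈ U21) (hU : h ∈ U21) :
    ∀ n, iterSeq g h n ∈ U21 := by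
  intro n
  induction n with
  | zero => exact hU
  | succ n ih =>
    show iterSeq g h n * g * (iterSeq g h n)⁻¹ ∈ U21
    exact u21_mul (u21_mul ih hgU) (u21_inv ih)

lemma iterSeq_mem_gen {g h : Matrix (Fin 3) (Fin 3) ℂ} (hgU : g ∈ U21) (hU : h ∈ U21) :
    ∀ n, iterSeq g h n ∈ genGrpC g h ∧ (iterSeq g h n)⁻¹ ∈ genGrpC g h := by
  have hgmem : g ∈ genGrpC g h := Submonoid.subset_closure (by simp)
  have hhmem : h ∈ genGrpC g h := Submonoid.subset_closure (by simp)
  have hgimem : g⁻¹ ∈ genGrpC g h := Submonoid.subset_closure (by simp)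
  have hhimem : h⁻¹ ∈ genGrpC g h := Submonoid.subset_closure (by simp)
  intro n
  induction n with
  | zero => exact ⟨hhmem, hhimem⟩
  | succ n ih =>
    have hinv : (iterSeq g h n * g * (iterSeq g h n)⁻¹)⁻¹
        = iterSeq g h n * g⁻¹ * (iterSeq g h n)⁻¹ := by
      rw [Matrix.mul_inv_rev, Matrix.mul_inv_rev,
        Matrix.nonsing_inv_nonsing_inv _ (u21_isUnit_det (iterSeq_mem_U21 hgU hU n))]
      rw [Matrix.mul_assoc]
    constructor
    · exact mul_mem (mul_mem ih.1 hgmem) ih.2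
    · show (iterSeq g h n * g * (iterSeq g h n)⁻¹)⁻¹ ∈ genGrpC g h
      rw [hinv]
      exact mul_mem (mul_mem ih.1 hgimem) ih.2

instance : FirstCountableTopology (Matrix (Fin 3) (Fin 3) ℂ) :=
  inferInstanceAs (FirstCountableTopology (Fin 3 → Fin 3 → ℂ))

lemma isClosed_U21 : IsClosed U21 := by
  have hcont : Continuous fun k : Matrix (Fin 3) (Fin 3) ℂ => kᴴ * J3 * k :=
    (Continuous.matrix_mul (continuous_id.matrix_conjTranspose) continuous_const).matrix_mul
      continuous_id
  have : U21 = (fun k : Matrix (Fin 3) (Fin 3) ℂ => kᴴ * J3 * k) ⁻¹' {J3} := by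
    ext k; simp [U21, Set.mem_preimage]
  rw [this]
  exact isClosed_singleton.preimage hcont

lemma compact_entries {R : ℝ} (hR : 0 ≤ R) :
    IsCompact {A : Matrix (Fin 3) (Fin 3) ℂ | ∀ i j, ‖A i j‖ ≤ R} := by
  have : {A : Matrix (Fin 3) (Fin 3) ℂ | ∀ i j, ‖A i j‖ ≤ R}
      = Set.pi Set.univ fun _ : Fin 3 =>
          Set.pi Set.univ fun _ : Fin 3 => Metric.closedBall (0 : ℂ) R := by
    ext A
    constructor
    · intro hA
      refine Set.mem_pi.mpr ?_
      intro i _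
      rw [Set.mem_pi]
      intro j _
      rw [Metric.mem_closedBall, dist_zero_right]
      exact hA i j
    · intro hA i j
      have h1 := Set.mem_pi.mp hA i (Set.mem_univ i)
      have h2 := Set.mem_pi.mp h1 j (Set.mem_univ j)
      rw [Metric.mem_closedBall, dist_zero_right] at h2
      exact h2
  rw [this]
  exact isCompact_univ_pi fun i => isCompact_univ_pi fun j => isCompact_closedBall _ _

theorem stmt13 (μ₁ μ₂ μ₃ : ℂ) (h₁ : ‖μ₁‖ = 1) (h₂ : ‖μ₂‖ = 1) (h₃ : ‖μ₃‖ = 1)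
    (h13 : μ₁ ≠ μ₃) (h23 : μ₂ ≠ μ₃)
    (g : Matrix (Fin 3) (Fin 3) ℂ) (hg : g = Matrix.diagonal ![μ₁, μ₂, μ₃])
    (hgU : g ∈ U21)
    (h : Matrix (Fin 3) (Fin 3) ℂ) (hU : h ∈ U21)
    (δ : ℝ) (hδ : δ = max (‖μ₁ - μ₃‖ ^ 2) (‖μ₂ - μ₃‖ ^ 2))
    (hsmall : ‖h 2 2‖ ^ 2 * δ < 1) :
    (h 0 2 = 0 ∧ h 1 2 = 0 ∧ h 2 0 = 0 ∧ h 2 1 = 0 ∧ ‖h 2 2‖ = 1)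
    ∨ ((∃ γ : ℕ → Matrix (Fin 3) (Fin 3) ℂ,
          (∀ m, γ m ∈ genGrpC g h) ∧
          Function.Injective γ ∧
          ∃ γinf ∈ U21, Tendsto γ atTop (nhds γinf)) ∧
        ¬ DiscreteTopology (genGrpC g h)) := by
  have n20 := Complex.normSq_nonneg (h 2 0)
  have n21 := Complex.normSq_nonneg (h 2 1)
  by_cases ht0 : tq h = 0
  · -- h fixes the origin
    left
    have h20 : Complex.normSq (h 2 0) = 0 := by
      simp only [tq] at ht0; linarith
    have h21 : Complex.normSq (h 2 1) = 0 := by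
      simp only [tq] at ht0; linarith
    have hcol := normSq_col2 hU
    rw [ht0] at hcol
    have n02 := Complex.normSq_nonneg (h 0 2)
    have n12 := Complex.normSq_nonneg (h 1 2)
    have h02 : Complex.normSq (h 0 2) = 0 := by linarith
    have h12 : Complex.normSq (h 1 2) = 0 := by linarith
    have h22 := normSq_22 hU
    rw [ht0] at h22
    have hn22 : ‖h 2 2‖ ^ 2 = 1 := by rw [norm_sq_eq_normSq, h22]; ring
    have hnn := norm_nonneg (h 2 2)
    refine ⟨Complex.normSq_eq_zero.mp h02, Complex.normSq_eq_zero.mp h12,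
      Complex.normSq_eq_zero.mp h20, Complex.normSq_eq_zero.mp h21, ?_⟩
    nlinarith
  · -- nondiscrete case
    right
    have htpos : 0 < tq h := lt_of_le_of_ne (tq_nonneg h) (Ne.symm ht0)
    have hδ0 : 0 ≤ δ := by rw [hδ]; positivity
    have e22 : ‖h 2 2‖ ^ 2 = 1 + tq h := by
      rw [norm_sq_eq_normSq]; exact normSq_22 hU
    have hF : δ * (1 + tq h) < 1 := by
      rw [e22] at hsmall; linarith [hsmall]
    set c : ℝ := min (Complex.normSq (μ₁ - μ₃)) (Complex.normSq (μ₂ - μ₃)) with hc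
    have hcpos : 0 < c :=
      lt_min (Complex.normSq_pos.mpr (sub_ne_zero.mpr h13))
        (Complex.normSq_pos.mpr (sub_ne_zero.mpr h23))
    have memU : ∀ n, iterSeq g h n ∈ U21 := iterSeq_mem_U21 hgU hU
    have memG := iterSeq_mem_gen hgU hU
    -- invariants
    have inv : ∀ n, 0 < tq (iterSeq g h n) ∧ tq (iterSeq g h n) ≤ tq h := by
      intro n
      induction n with
      | zero => exact ⟨htpos, le_refl _⟩
      | succ n ih =>
        have hb := step_bounds hδ hg (memU n)
        have hup : tq (iterSeq g h (n + 1))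
            ≤ δ * (1 + tq (iterSeq g h n)) * tq (iterSeq g h n) := hb.1
        have hlo : c * tq (iterSeq g h n) ≤ tq (iterSeq g h (n + 1)) := hb.2
        constructor
        · exact lt_of_lt_of_le (mul_pos hcpos ih.1) hlo
        · have s1 : δ * (1 + tq (iterSeq g h n)) ≤ δ * (1 + tq h) := by nlinarith [ih.2]
          have s2 : δ * (1 + tq (iterSeq g h n)) * tq (iterSeq g h n)
              ≤ 1 * tq (iterSeq g h n) :=
            mul_le_mul_of_nonneg_right (le_of_lt (lt_of_le_of_lt s1 hF)) ih.1.le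
          linarith [ih.2, hup]
    have dec : ∀ n, tq (iterSeq g h (n + 1)) < tq (iterSeq g h n) := by
      intro n
      have hb : tq (iterSeq g h (n + 1))
          ≤ δ * (1 + tq (iterSeq g h n)) * tq (iterSeq g h n) :=
        (step_bounds hδ hg (memU n)).1
      have h1 := (inv n).1
      have h2 := (inv n).2
      have s1 : δ * (1 + tq (iterSeq g h n)) ≤ δ * (1 + tq h) := by nlinarith
      have s2 : δ * (1 + tq (iterSeq g h n)) * tq (iterSeq g h n)
          < 1 * tq (iterSeq g h n) :=
        mul_lt_mul_of_pos_right (lt_of_le_of_lt s1 hF) h1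
      linarith
    have sa : StrictAnti fun n => tq (iterSeq g h n) := strictAnti_nat_of_succ_lt dec
    have hinj : Function.Injective (iterSeq g h) := fun a b hab =>
      sa.injective (congrArg tq hab)
    -- boundedness and convergent subsequence
    set Rb : ℝ := Real.sqrt (1 + tq h) with hRb
    have hmemK : ∀ n, iterSeq g h n ∈ {A : Matrix (Fin 3) (Fin 3) ℂ | ∀ i j, ‖A i j‖ ≤ Rb} := by
      intro n i j
      have h1 : Complex.normSq (iterSeq g h n i j) ≤ 1 + tq h := by
        have := entry_bound (memU n) i j
        linarith [(inv n).2]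
      rw [← norm_sq_eq_normSq] at h1
      have h2 := Real.sqrt_le_sqrt h1
      rwa [Real.sqrt_sq (norm_nonneg _)] at h2
    obtain ⟨L, hLK, φ, hφ, htend⟩ :=
      (compact_entries (Real.sqrt_nonneg _)).tendsto_subseq hmemK
    have hLU : L ∈ U21 :=
      isClosed_U21.mem_of_tendsto htend (Filter.Eventually.of_forall fun j => memU (φ j))
    refine ⟨⟨iterSeq g h ∘ φ, fun m => (memG (φ m)).1, hinj.comp hφ.injective,
      L, hLU, htend⟩, ?_⟩
    -- non-discreteness
    intro hd
    set q : ℕ → Matrix (Fin 3) (Fin 3) ℂ :=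
      fun j => iterSeq g h (φ (j + 1)) * (iterSeq g h (φ j))⁻¹ with hq
    have hqmem : ∀ j, q j ∈ genGrpC g h := fun j =>
      mul_mem (memG (φ (j + 1))).1 (memG (φ j)).2
    have hqne : ∀ j, q j ≠ 1 := by
      intro j hqj
      have hdet := u21_isUnit_det (memU (φ j))
      have heq : iterSeq g h (φ (j + 1)) = iterSeq g h (φ j) := by
        calc iterSeq g h (φ (j + 1))
            = iterSeq g h (φ (j + 1)) * ((iterSeq g h (φ j))⁻¹ * iterSeq g h (φ j)) := by
              rw [Matrix.nonsing_inv_mul _ hdet, Matrix.mul_one]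
          _ = q j * iterSeq g h (φ j) := by rw [hq]; rw [Matrix.mul_assoc]
          _ = iterSeq g h (φ j) := by rw [hqj, Matrix.one_mul]
      have := hinj heq
      have hlt := hφ (by omega : j < j + 1)
      omega
    have htend2 : Tendsto (fun j => iterSeq g h (φ (j + 1))) atTop (𝓝 L) := by
      have := htend.comp (tendsto_add_atTop_nat 1)
      exact this
    have htendinv : Tendsto (fun j => J3 * (iterSeq g h (φ j))ᴴ * J3) atTop
        (𝓝 (J3 * Lᴴ * J3)) := by
      have hcont : Continuous fun A : Matrix (Fin 3) (Fin 3) ℂ => J3 * Aᴴ * J3 :=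
        (continuous_const.matrix_mul continuous_id.matrix_conjTranspose).matrix_mul
          continuous_const
      exact (hcont.tendsto L).comp htend
    have htendq : Tendsto q atTop (𝓝 1) := by
      have hmulc : Continuous fun p : Matrix (Fin 3) (Fin 3) ℂ × Matrix (Fin 3) (Fin 3) ℂ =>
          p.1 * p.2 := continuous_fst.matrix_mul continuous_snd
      have hcomb := (hmulc.tendsto (L, J3 * Lᴴ * J3)).comp (htend2.prodMk_nhds htendinv)
      have hone : L * (J3 * Lᴴ * J3) = 1 := u21_right_inv hLU
      have hfin : Tendsto q atTop (𝓝 (L * (J3 * Lᴴ * J3))) := by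
        apply hcomb.congr
        intro j
        simp only [Function.comp_apply, hq]
        rw [u21_inv_eq (memU (φ j))]
      rwa [hone] at hfin
    have hq' : Tendsto (fun j => (⟨q j, hqmem j⟩ : genGrpC g h)) atTop
        (𝓝 (⟨1, one_mem _⟩ : genGrpC g h)) := by
      rw [tendsto_subtype_rng]
      exact htendq
    rw [nhds_discrete] at hq'
    obtain ⟨j, hj⟩ := (tendsto_pure.mp hq').exists
    exact hqne j (congrArg Subtype.val hj)
end

section
/- Let a, b, c, d ∈ ℂ with ad − bc = 1, regarded as quaternions, and let T = (1/√2)·[[1, −j],[−j, 1]] with T⁻¹ = (1/√2)·[[1, j],[j, 1]]. Then ĥ = T·[[a, b],[c, d]]·T⁻¹ satisfies ĥ* J ĥ = J where J = diag(1, −1), i.e. ĥ ∈ Sp(1,1); moreover, for every θ ∈ ℝ, T·diag(e^{iθ}, e^{−iθ})·T⁻¹ = diag(e^{iθ}, e^{−iθ}). -/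
open Quaternion Matrix

/-- The matrix `T = (1/√2)·[[1, −j],[−j, 1]]`. -/
noncomputable def Tm : Matrix (Fin 2) (Fin 2) ℍ[ℝ] :=
  (Real.sqrt 2)⁻¹ • !![1, -jq; -jq, 1]

/-- The matrix `T⁻¹ = (1/√2)·[[1, j],[j, 1]]`. -/
noncomputable def Tmi : Matrix (Fin 2) (Fin 2) ℍ[ℝ] :=
  (Real.sqrt 2)⁻¹ • !![1, jq; jq, 1]

/-- The Hermitian form `J = diag(1, −1)` defining `Sp(1,1)`. -/
noncomputable def J2 : Matrix (Fin 2) (Fin 2) ℍ[ℝ] := !![1, 0; 0, -1]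

@[simp] lemma cq_re (z : ℂ) : (cq z).re = z.re := rfl
@[simp] lemma cq_imI (z : ℂ) : (cq z).imI = z.im := rfl
@[simp] lemma cq_imJ (z : ℂ) : (cq z).imJ = 0 := rfl
@[simp] lemma cq_imK (z : ℂ) : (cq z).imK = 0 := rfl
@[simp] lemma jq_re : jq.re = 0 := rfl
@[simp] lemma jq_imI : jq.imI = 0 := rfl
@[simp] lemma jq_imJ : jq.imJ = 1 := rfl
@[simp] lemma jq_imK : jq.imK = 0 := rfl
@[simp] lemma expI_re (θ : ℝ) : (expI θ).re = Real.cos θ := rfl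
@[simp] lemma expI_imI (θ : ℝ) : (expI θ).imI = Real.sin θ := rfl
@[simp] lemma expI_imJ (θ : ℝ) : (expI θ).imJ = 0 := rfl
@[simp] lemma expI_imK (θ : ℝ) : (expI θ).imK = 0 := rfl

/-- Quaternion-typed constructor. -/
def qmk (w x y z : ℝ) : ℍ[ℝ] := ⟨w, x, y, z⟩
@[simp] lemma qmk_re (w x y z : ℝ) : (qmk w x y z).re = w := rfl
@[simp] lemma qmk_imI (w x y z : ℝ) : (qmk w x y z).imI = x := rfl
@[simp] lemma qmk_imJ (w x y z : ℝ) : (qmk w x y z).imJ = y := rfl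
@[simp] lemma qmk_imK (w x y z : ℝ) : (qmk w x y z).imK = z := rfl

lemma key_half (X : Matrix (Fin 2) (Fin 2) ℍ[ℝ]) :
    Tm * X * Tmi = (2:ℝ)⁻¹ • (!![(1:ℍ[ℝ]), -jq; -jq, 1] * X * !![1, jq; jq, 1]) := by
  simp only [Tm, Tmi, smul_mul_assoc, mul_smul_comm, smul_smul]
  rw [← mul_inv, Real.mul_self_sqrt (by norm_num)]

lemma key_half' (X : Matrix (Fin 2) (Fin 2) ℍ[ℝ]) :
    Tmi * X * Tm = (2:ℝ)⁻¹ • (!![(1:ℍ[ℝ]), jq; jq, 1] * X * !![1, -jq; -jq, 1]) := by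
  simp only [Tm, Tmi, smul_mul_assoc, mul_smul_comm, smul_smul]
  rw [← mul_inv, Real.mul_self_sqrt (by norm_num)]

lemma prodN (a b c d : ℂ) :
    !![(1:ℍ[ℝ]), -jq; -jq, 1] * !![cq a, cq b; cq c, cq d] * !![1, jq; jq, 1] =
    !![qmk (a.re+d.re) (a.im-d.im) (b.re-c.re) (b.im+c.im), qmk (b.re+c.re) (b.im-c.im) (a.re-d.re) (a.im+d.im);
       qmk (b.re+c.re) (c.im-b.im) (d.re-a.re) (a.im+d.im), qmk (a.re+d.re) (d.im-a.im) (c.re-b.re) (b.im+c.im)] := by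
  refine Matrix.ext fun i k => ?_
  fin_cases i <;> fin_cases k <;>
    simp [Matrix.mul_apply, Fin.sum_univ_two, Quaternion.ext_iff] <;> ring_nf <;> simp

set_option maxHeartbeats 2000000 in
theorem stmt14 (a b c d : ℂ) (hdet : a * d - b * c = 1) :
    Tm * Tmi = 1 ∧ Tmi * Tm = 1
    ∧ (Tm * !![cq a, cq b; cq c, cq d] * Tmi)ᴴ * J2 * (Tm * !![cq a, cq b; cq c, cq d] * Tmi)
        = J2
    ∧ ∀ θ : ℝ, Tm * !![expI θ, 0; 0, expI (-θ)] * Tmi = !![expI θ, 0; 0, expI (-θ)] := by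
  have hTT : Tm * Tmi = 1 := by
    have := key_half 1
    rw [mul_one] at this
    rw [this]
    refine Matrix.ext fun i k => ?_
    fin_cases i <;> fin_cases k <;>
      simp [Matrix.mul_apply, Fin.sum_univ_two, Quaternion.ext_iff, Matrix.one_apply] <;>
      norm_num
  have hTT' : Tmi * Tm = 1 := by
    have := key_half' 1
    rw [mul_one] at this
    rw [this]
    refine Matrix.ext fun i k => ?_
    fin_cases i <;> fin_cases k <;>
      simp [Matrix.mul_apply, Fin.sum_univ_two, Quaternion.ext_iff, Matrix.one_apply] <;>
      norm_num
  refine ⟨hTT, hTT', ?_, ?_⟩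
  · rw [Complex.ext_iff] at hdet
    obtain ⟨h1, h2⟩ := hdet
    simp only [Complex.mul_re, Complex.mul_im, Complex.sub_re, Complex.sub_im,
      Complex.one_re, Complex.one_im] at h1 h2
    rw [key_half, prodN]
    refine Matrix.ext fun i k => ?_
    fin_cases i <;> fin_cases k <;>
      simp [J2, Matrix.mul_apply, Fin.sum_univ_two, Quaternion.ext_iff,
        Matrix.conjTranspose_apply] <;>
      ring_nf <;> and_intros <;>
      first
        | trivial
        | linear_combination h1
        | linear_combination h2
        | linear_combination -h2
        | linear_combination -h1
  · intro θ
    rw [key_half]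
    refine Matrix.ext fun i k => ?_
    fin_cases i <;> fin_cases k <;>
      simp [Matrix.mul_apply, Fin.sum_univ_two, Quaternion.ext_iff,
        Real.cos_neg, Real.sin_neg] <;>
      ring_nf <;> and_intros <;> first | trivial | ring
end
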